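/- The conditional expectation E(ζ φ(ζ)/Φ(ζ) | U = 1) satisfies (1/(σ Φ(μ₂))) ∫_{-∞}^{∞} ζ(y) φ(ζ(y)) φ(z(y)) dy = μ₂ (1 − ρ²) φ(μ₂)/Φ(μ₂). -/

import Mathlib

open MeasureTheory Set

/-- Standard normal density. -/
noncomputable def phi (t : ℝ) : ℝ := Real.exp (-(t ^ 2) / 2) / Real.sqrt (2 * Real.pi)

/-- Standard normal cumulative distribution function. -/
noncomputable def Phi (x : ℝ) : ℝ := ∫ t in Set.Iic x, phi t

lemma phi_eq (t : ℝ) : phi t = Real.exp (-(2⁻¹) * t ^ 2) / Real.sqrt (2 * Real.pi) := by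
  unfold phi; ring_nf

lemma sqrt_two_pi_pos : 0 < Real.sqrt (2 * Real.pi) :=
  Real.sqrt_pos.2 (by positivity)

lemma integrable_phi : Integrable phi := by
  have h := (integrable_exp_neg_mul_sq (by norm_num : (0:ℝ) < 2⁻¹)).div_const
    (Real.sqrt (2 * Real.pi))
  refine h.congr (Filter.Eventually.of_forall fun x => ?_)
  rw [phi_eq]

lemma integrable_mul_phi : Integrable (fun x => x * phi x) := by
  have h := (integrable_mul_exp_neg_mul_sq (by norm_num : (0:ℝ) < 2⁻¹)).div_const
    (Real.sqrt (2 * Real.pi))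
  refine h.congr (Filter.Eventually.of_forall fun x => ?_)
  simp only [phi_eq]; ring

lemma integral_phi : ∫ x : ℝ, phi x = 1 := by
  have : ∫ x : ℝ, phi x = (∫ x : ℝ, Real.exp (-(2⁻¹) * x ^ 2)) / Real.sqrt (2 * Real.pi) := by
    rw [← integral_div]
    exact integral_congr_ae (Filter.Eventually.of_forall fun x => phi_eq x)
  rw [this, integral_gaussian]
  rw [show Real.pi / 2⁻¹ = 2 * Real.pi by ring]
  exact div_self sqrt_two_pi_pos.ne'

lemma integral_mul_phi : ∫ x : ℝ, x * phi x = 0 := by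
  have h : ∫ x : ℝ, (fun t => t * phi t) (-x) = ∫ x : ℝ, x * phi x :=
    integral_neg_eq_self (fun t => t * phi t) volume
  have h2 : ∀ x : ℝ, (fun t => t * phi t) (-x) = -(x * phi x) := by
    intro x
    simp only
    have : phi (-x) = phi x := by unfold phi; rw [neg_pow]; ring_nf
    rw [this]; ring
  rw [integral_congr_ae (Filter.Eventually.of_forall h2), integral_neg] at h
  linarith

theorem GH_zeta_hazard_conditional_mean (μ₁ μ₂ σ ρ : ℝ) (hσ : 0 < σ) (hρ₁ : -1 < ρ) (hρ₂ : ρ < 1)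
    (z ζ : ℝ → ℝ)
    (hz : ∀ y, z y = (y - μ₁) / σ)
    (hζ : ∀ y, ζ y = (μ₂ + ρ * z y) / Real.sqrt (1 - ρ ^ 2)) :
    (1 / (σ * Phi μ₂)) * ∫ y : ℝ, ζ y * phi (ζ y) * phi (z y)
      = μ₂ * (1 - ρ ^ 2) * phi μ₂ / Phi μ₂ := by
  set s : ℝ := Real.sqrt (1 - ρ ^ 2) with hs_def
  have hρsq : (0:ℝ) < 1 - ρ ^ 2 := by nlinarith
  have hs : 0 < s := Real.sqrt_pos.2 hρsq
  have hs2 : s ^ 2 = 1 - ρ ^ 2 := Real.sq_sqrt hρsq.le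
  set c : ℝ := μ₁ - σ * ρ * μ₂ with hc_def
  set w : ℝ → ℝ := fun y => (y - c) / (σ * s) with hw_def
  have hzw : ∀ y, z y = s * w y - ρ * μ₂ := by
    intro y
    rw [hz, hw_def, hc_def]
    field_simp
    ring
  have hζw : ∀ y, ζ y = s * μ₂ + ρ * w y := by
    intro y
    rw [hζ, hzw y, div_eq_iff hs.ne']
    linear_combination (-μ₂) * hs2
  have hsq : ∀ y, (ζ y) ^ 2 + (z y) ^ 2 = μ₂ ^ 2 + (w y) ^ 2 := by
    intro y
    rw [hζw y, hzw y]
    linear_combination (μ₂ ^ 2 + (w y) ^ 2) * hs2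
  -- pointwise identity
  have hpt : ∀ y, ζ y * phi (ζ y) * phi (z y)
      = phi μ₂ * ((s * μ₂ + ρ * w y) * phi (w y)) := by
    intro y
    have hζ' := hζw y
    have hsq' := hsq y
    generalize w y = W at hζ' hsq' ⊢
    have hexp : Real.exp (-(ζ y) ^ 2 / 2) * Real.exp (-(z y) ^ 2 / 2)
        = Real.exp (-μ₂ ^ 2 / 2) * Real.exp (-W ^ 2 / 2) := by
      rw [← Real.exp_add, ← Real.exp_add]
      congr 1
      linarith
    unfold phi
    rw [hζ']
    rw [hζ'] at hexp
    have hT : Real.sqrt (2 * Real.pi) ≠ 0 := sqrt_two_pi_pos.ne'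
    field_simp
    simp only [neg_div] at hexp
    linear_combination (s * μ₂ + ρ * W) * hexp
  have hint : (∫ y : ℝ, ζ y * phi (ζ y) * phi (z y))
      = σ * (1 - ρ ^ 2) * μ₂ * phi μ₂ := by
    rw [integral_congr_ae (Filter.Eventually.of_forall hpt), integral_const_mul]
    have hcomp : (∫ y : ℝ, (s * μ₂ + ρ * w y) * phi (w y))
        = ∫ y : ℝ, (fun x => (s * μ₂ + ρ * x) * phi x) ((y - c) / (σ * s)) := by
      simp [hw_def]
    rw [hcomp]
    have hsub : (∫ y : ℝ, (fun x => (s * μ₂ + ρ * x) * phi x) ((y - c) / (σ * s)))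
        = ∫ y : ℝ, (fun x => (s * μ₂ + ρ * x) * phi x) (y / (σ * s)) := by
      have := integral_sub_right_eq_self (μ := volume)
        (fun y : ℝ => (fun x => (s * μ₂ + ρ * x) * phi x) (y / (σ * s))) c
      simpa using this
    rw [hsub, MeasureTheory.Measure.integral_comp_div (fun x => (s * μ₂ + ρ * x) * phi x) (σ * s)]
    have hI : (∫ x : ℝ, (s * μ₂ + ρ * x) * phi x) = s * μ₂ := by
      have h1 : (fun x : ℝ => (s * μ₂ + ρ * x) * phi x)
          = fun x : ℝ => (s * μ₂) * phi x + ρ * (x * phi x) := by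
        funext x; ring
      rw [h1, integral_add ((integrable_phi.const_mul _))
        ((integrable_mul_phi.const_mul _)), integral_const_mul, integral_const_mul,
        integral_phi, integral_mul_phi]
      ring
    rw [hI, abs_of_pos (by positivity : (0:ℝ) < σ * s), smul_eq_mul]
    have : σ * s * (s * μ₂) = σ * s ^ 2 * μ₂ := by ring
    rw [this, hs2]
    ring
  rw [hint]
  by_cases hP : Phi μ₂ = 0
  · simp [hP]
  · field_simp
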